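/- Any self-avoiding path of length ℓ > 4 in the dual graph of the k×k grid contains a set of at least ⌊ℓ/3⌋ pairwise disjoint adjacent vertex pairs of the grid, each pair separated by some edge of the path. -/

import Mathlib

/-- Adjacency in the dual square lattice `ℤ × ℤ`. -/
def dualAdj (d d' : ℤ × ℤ) : Prop := |d'.1 - d.1| + |d'.2 - d.2| = 1

/-- The pair of adjacent grid vertices separated by the dual edge from `d` to `d'`
(dual vertex `(a,b)` sits at `(a + 1/2, b + 1/2)`). -/
def sepPair (d d' : ℤ × ℤ) : (ℤ × ℤ) × (ℤ × ℤ) :=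
  if d'.1 = d.1 + 1 then ((d.1 + 1, d.2), (d.1 + 1, d.2 + 1))
  else if d'.1 = d.1 - 1 then ((d.1, d.2), (d.1, d.2 + 1))
  else if d'.2 = d.2 + 1 then ((d.1, d.2 + 1), (d.1 + 1, d.2 + 1))
  else ((d.1, d.2), (d.1 + 1, d.2))

/-- A vertex of the `k × k` grid `{0,…,k−1}²`. -/
def inGrid (k : ℕ) (u : ℤ × ℤ) : Prop :=
  0 ≤ u.1 ∧ u.1 < (k : ℤ) ∧ 0 ≤ u.2 ∧ u.2 < (k : ℤ)

/-- A self-avoiding path or circuit of length `ℓ` in the dual lattice of the `k × k` grid: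
consecutive dual vertices are adjacent, every dual edge separates a pair of grid vertices of
`G_k`, and vertices are distinct except that the endpoints may coincide (circuit). -/
def IsDualPathStar (k ℓ : ℕ) (v : Fin (ℓ + 1) → ℤ × ℤ) : Prop :=
  (∀ i : Fin ℓ, dualAdj (v i.castSucc) (v i.succ)) ∧
  (∀ i : Fin ℓ, inGrid k (sepPair (v i.castSucc) (v i.succ)).1 ∧
    inGrid k (sepPair (v i.castSucc) (v i.succ)).2) ∧
  (∀ i j : Fin (ℓ + 1), i < j → v i = v j → i = 0 ∧ j = Fin.last ℓ)

/-- Any self-avoiding path* of length `ℓ > 4` in the dual of the `k × k` grid contains at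
least `⌊ℓ/3⌋` pairwise disjoint adjacent vertex pairs, each separated by an edge of the
path. -/
lemma st7_adj (d d' : ℤ × ℤ) (h : dualAdj d d') :
    (d'.1 = d.1 + 1 ∧ d'.2 = d.2) ∨ (d'.1 = d.1 - 1 ∧ d'.2 = d.2) ∨
    (d'.2 = d.2 + 1 ∧ d'.1 = d.1) ∨ (d'.2 = d.2 - 1 ∧ d'.1 = d.1) := by
  unfold dualAdj at h
  rw [Int.abs_eq_natAbs, Int.abs_eq_natAbs] at h
  omega

-- the four explicit evaluations
lemma st7_sep1 (x y : ℤ) : sepPair (x, y) (x + 1, y) = ((x + 1, y), (x + 1, y + 1)) := by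
  simp [sepPair]

lemma st7_sep2 (x y : ℤ) : sepPair (x, y) (x - 1, y) = ((x, y), (x, y + 1)) := by
  simp [sepPair]; omega

lemma st7_sep3 (x y : ℤ) : sepPair (x, y) (x, y + 1) = ((x, y + 1), (x + 1, y + 1)) := by
  simp [sepPair]; omega

lemma st7_sep4 (x y : ℤ) : sepPair (x, y) (x, y - 1) = ((x, y), (x + 1, y)) := by
  have h1 : ¬((x, y - 1) : ℤ × ℤ).1 = (x, y).1 + 1 := by show ¬x = x + 1; omega
  have h2 : ¬((x, y - 1) : ℤ × ℤ).1 = (x, y).1 - 1 := by show ¬x = x - 1; omega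
  have h3 : ¬((x, y - 1) : ℤ × ℤ).2 = (x, y).2 + 1 := by show ¬y - 1 = y + 1; omega
  rw [sepPair, if_neg h1, if_neg h2, if_neg h3]

/-- recover the unordered dual edge from the separated pair -/
def st7_backL (P : (ℤ × ℤ) × (ℤ × ℤ)) : ℤ × ℤ :=
  if P.2.1 = P.1.1 then (P.1.1 - 1, P.1.2) else (P.1.1, P.1.2 - 1)

lemma st7_rec (d d' : ℤ × ℤ) (h : dualAdj d d') :
    (d = st7_backL (sepPair d d') ∧ d' = (sepPair d d').1) ∨
    (d = (sepPair d d').1 ∧ d' = st7_backL (sepPair d d')) := by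
  obtain ⟨x, y⟩ := d
  obtain ⟨x', y'⟩ := d'
  rcases st7_adj _ _ h with ⟨h1, h2⟩ | ⟨h1, h2⟩ | ⟨h1, h2⟩ | ⟨h1, h2⟩ <;>
      simp only at h1 h2 <;> subst h1 <;> subst h2
  · rw [st7_sep1]; left; simp [st7_backL]
  · rw [st7_sep2]; right; simp [st7_backL]
  · rw [st7_sep3]; left; simp [st7_backL]
  · rw [st7_sep4]; right; simp [st7_backL]

lemma st7_sum (d d' : ℤ × ℤ) :
    (sepPair d d').2.1 + (sepPair d d').2.2 = (sepPair d d').1.1 + (sepPair d d').1.2 + 1 := by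
  unfold sepPair
  split_ifs <;> simp <;> ring

/-- normalize a pair so that the even-parity vertex comes first -/
def st7_npair (P : (ℤ × ℤ) × (ℤ × ℤ)) : (ℤ × ℤ) × (ℤ × ℤ) :=
  if Even (P.1.1 + P.1.2) then P else (P.2, P.1)

lemma st7_npair_inj (a b c e : ℤ × ℤ)
    (h : st7_npair (sepPair a b) = st7_npair (sepPair c e)) :
    sepPair a b = sepPair c e := by
  have hs1 := st7_sum a b
  have hs2 := st7_sum c e
  unfold st7_npair at h
  split_ifs at h with h1 h2 h2
  · exact h
  · exfalso
    have e1 : (sepPair a b).1 = (sepPair c e).2 := congrArg Prod.fst h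
    have e2 : (sepPair a b).2 = (sepPair c e).1 := congrArg Prod.snd h
    rw [e1, e2] at hs1
    omega
  · exfalso
    have e1 : (sepPair a b).2 = (sepPair c e).1 := congrArg Prod.fst h
    have e2 : (sepPair a b).1 = (sepPair c e).2 := congrArg Prod.snd h
    rw [e1, e2] at hs1
    omega
  · have e1 : (sepPair a b).2 = (sepPair c e).2 := congrArg Prod.fst h
    have e2 : (sepPair a b).1 = (sepPair c e).1 := congrArg Prod.snd h
    exact Prod.ext e2 e1

/-- equal pairs come from the same unordered dual edge -/
lemma st7_pair_inj (a b c e : ℤ × ℤ) (hab : dualAdj a b) (hce : dualAdj c e)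
    (h : sepPair a b = sepPair c e) :
    (a = c ∧ b = e) ∨ (a = e ∧ b = c) := by
  rcases st7_rec a b hab with ⟨h1, h2⟩ | ⟨h1, h2⟩ <;>
      rcases st7_rec c e hce with ⟨h3, h4⟩ | ⟨h3, h4⟩ <;>
      rw [h] at h1 h2
  · exact Or.inl ⟨h1.trans h3.symm, h2.trans h4.symm⟩
  · exact Or.inr ⟨h1.trans h4.symm, h2.trans h3.symm⟩
  · exact Or.inr ⟨h1.trans h4.symm, h2.trans h3.symm⟩
  · exact Or.inl ⟨h1.trans h3.symm, h2.trans h4.symm⟩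

/-- the four dual vertices around a grid vertex -/
def st7_corners (p : ℤ × ℤ) : Finset (ℤ × ℤ) :=
  {(p.1 - 1, p.2 - 1), (p.1, p.2 - 1), (p.1 - 1, p.2), p}

lemma st7_corners_card (p : ℤ × ℤ) : (st7_corners p).card ≤ 4 := by
  unfold st7_corners
  refine le_trans (Finset.card_insert_le _ _) ?_
  refine Nat.succ_le_succ ?_
  refine le_trans (Finset.card_insert_le _ _) ?_
  refine Nat.succ_le_succ ?_
  refine le_trans (Finset.card_insert_le _ _) ?_
  simp

lemma st7_mem_corners (d d' p : ℤ × ℤ) (h : dualAdj d d')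
    (hp : p = (sepPair d d').1 ∨ p = (sepPair d d').2) :
    d ∈ st7_corners p ∧ d' ∈ st7_corners p := by
  obtain ⟨x, y⟩ := d
  obtain ⟨x', y'⟩ := d'
  rcases st7_adj _ _ h with ⟨h1, h2⟩ | ⟨h1, h2⟩ | ⟨h1, h2⟩ | ⟨h1, h2⟩ <;>
      simp only at h1 h2 <;> subst h1 <;> subst h2 <;>
      [rw [st7_sep1] at hp; rw [st7_sep2] at hp; rw [st7_sep3] at hp; rw [st7_sep4] at hp] <;>
      rcases hp with rfl | rfl <;>
      constructor <;>
      simp [st7_corners, Prod.ext_iff] <;> omega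

/-- Purely combinatorial: at most 3 edges of a self-avoiding path* can have both endpoints
in a given 4-element set. -/
lemma st7_core {α : Type} [DecidableEq α] {ℓ : ℕ} (hℓ : 4 < ℓ) (v : Fin (ℓ + 1) → α)
    (hv3 : ∀ i j : Fin (ℓ + 1), i < j → v i = v j → i = 0 ∧ j = Fin.last ℓ)
    (C : Finset α) (hC : C.card ≤ 4)
    (S : Finset (Fin ℓ)) (hS : ∀ i ∈ S, v i.castSucc ∈ C ∧ v i.succ ∈ C) :
    S.card ≤ 3 := by
  by_contra hcon
  push_neg at hcon
  obtain ⟨S', hsub, hcard⟩ := Finset.exists_subset_card_eq (show 4 ≤ S.card by omega)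
  have hne : S'.Nonempty := Finset.card_pos.mp (by omega)
  set A : Finset (Fin (ℓ + 1)) := S'.image Fin.castSucc with hA
  set B : Finset (Fin (ℓ + 1)) := S'.image Fin.succ with hB
  set J : Finset (Fin (ℓ + 1)) := A ∪ B with hJ
  have hJC : ∀ x ∈ J, v x ∈ C := by
    intro x hx
    rw [hJ, Finset.mem_union] at hx
    rcases hx with hx | hx <;> obtain ⟨i, hi, rfl⟩ := Finset.mem_image.mp hx
    · exact (hS i (hsub hi)).1
    · exact (hS i (hsub hi)).2
  -- injectivity away from an endpoint
  have hinj : ∀ x y : Fin (ℓ + 1), v x = v y → x = y ∨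
      ({x, y} : Set (Fin (ℓ + 1))) = {0, Fin.last ℓ} := by
    intro x y hxy
    rcases lt_trichotomy x y with h | h | h
    · obtain ⟨rfl, rfl⟩ := hv3 x y h hxy
      right; rfl
    · exact Or.inl h
    · obtain ⟨rfl, rfl⟩ := hv3 y x h hxy.symm
      right; exact Set.pair_comm _ _
  have herase : ∀ a : Fin (ℓ + 1), (a = 0 ∨ a = Fin.last ℓ) → (J.erase a).card ≤ 4 := by
    intro a ha
    refine le_trans (Finset.card_le_card_of_injOn v
      (fun x hx => hJC x (Finset.mem_of_mem_erase hx)) ?_) hC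
    intro x hx y hy hxy
    rcases hinj x y hxy with h | h
    · exact h
    · exfalso
      have hx' := Finset.ne_of_mem_erase hx
      have hy' := Finset.ne_of_mem_erase hy
      have h0 : (0 : Fin (ℓ + 1)) ∈ ({x, y} : Set (Fin (ℓ + 1))) := by rw [h]; simp
      have hl : Fin.last ℓ ∈ ({x, y} : Set (Fin (ℓ + 1))) := by rw [h]; simp
      rcases ha with rfl | rfl
      · rcases h0 with rfl | rfl
        · exact hx' rfl
        · exact hy' rfl
      · rcases hl with rfl | rfl
        · exact hx' rfl
        · exact hy' rfl
  have hJle : J.card ≤ 5 := by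
    by_cases hmem : Fin.last ℓ ∈ J
    · have := herase (Fin.last ℓ) (Or.inr rfl)
      rw [Finset.card_erase_of_mem hmem] at this
      omega
    · rw [← Finset.erase_eq_of_notMem hmem]
      exact le_trans (herase (Fin.last ℓ) (Or.inr rfl)) (by omega)
  have hAcard : A.card = 4 := by
    rw [hA, Finset.card_image_of_injective _ (Fin.castSucc_injective ℓ), hcard]
  set m := S'.max' hne with hm
  have hmS : m ∈ S' := S'.max'_mem hne
  have hsm : Fin.succ m ∉ A := by
    intro hmem
    obtain ⟨j, hj, hjeq⟩ := Finset.mem_image.mp hmem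
    have h1 : j.val = m.val + 1 := by
      have := congrArg Fin.val hjeq
      simpa using this
    have h2 : j ≤ m := S'.le_max' j hj
    rw [Fin.le_def] at h2
    omega
  have hJge : 5 ≤ J.card := by
    have hsub2 : insert (Fin.succ m) A ⊆ J := by
      intro x hx
      rcases Finset.mem_insert.mp hx with rfl | hx
      · exact Finset.mem_union_right _ (Finset.mem_image_of_mem _ hmS)
      · exact Finset.mem_union_left _ hx
    calc 5 = (insert (Fin.succ m) A).card := by
            rw [Finset.card_insert_of_notMem hsm, hAcard]
      _ ≤ J.card := Finset.card_le_card hsub2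
  have hJcard : J.card = 5 := le_antisymm hJle hJge
  have hlastJ : Fin.last ℓ ∈ J := by
    by_contra hmem
    rw [← Finset.erase_eq_of_notMem hmem] at hJcard
    have := herase (Fin.last ℓ) (Or.inr rfl)
    omega
  have h0J : (0 : Fin (ℓ + 1)) ∈ J := by
    by_contra hmem
    rw [← Finset.erase_eq_of_notMem hmem] at hJcard
    have := herase 0 (Or.inl rfl)
    omega
  -- 0 comes from A, i.e. 0 ∈ S' (value 0)
  have h0S : ∃ i ∈ S', i.val = 0 := by
    rcases Finset.mem_union.mp h0J with hx | hx
    · obtain ⟨i, hi, hieq⟩ := Finset.mem_image.mp hx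
      refine ⟨i, hi, ?_⟩
      have := congrArg Fin.val hieq
      simpa using this
    · obtain ⟨i, hi, hieq⟩ := Finset.mem_image.mp hx
      exact absurd hieq (Fin.succ_ne_zero i)
  -- B \ A = {last}
  have hlastA : Fin.last ℓ ∉ A := by
    intro hmem
    obtain ⟨i, hi, hieq⟩ := Finset.mem_image.mp hmem
    have := congrArg Fin.val hieq
    simp [Fin.val_last] at this
    omega
  have hBA : B \ A = {Fin.last ℓ} := by
    have hcardBA : (B \ A).card = 1 := by
      have hun : J.card = A.card + (B \ A).card := by
        rw [hJ, Finset.union_comm, ← Finset.sdiff_union_self_eq_union]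
        rw [Finset.card_union_of_disjoint (Finset.sdiff_disjoint)]
        omega
      omega
    obtain ⟨x, hx⟩ := Finset.card_eq_one.mp hcardBA
    have hlmem : Fin.last ℓ ∈ B \ A := by
      rw [Finset.mem_sdiff]
      refine ⟨?_, hlastA⟩
      rcases Finset.mem_union.mp hlastJ with h | h
      · exact absurd h hlastA
      · exact h
    rw [hx] at hlmem ⊢
    rw [Finset.mem_singleton.mp hlmem]
  -- closure property
  have hclose : ∀ i ∈ S', i.val + 1 < ℓ → ∃ j ∈ S', j.val = i.val + 1 := by
    intro i hi hlt
    have hsB : Fin.succ i ∈ B := Finset.mem_image_of_mem _ hi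
    have hsnl : Fin.succ i ≠ Fin.last ℓ := by
      intro h
      have := congrArg Fin.val h
      simp [Fin.val_last] at this
      omega
    have hsA : Fin.succ i ∈ A := by
      by_contra h
      have : Fin.succ i ∈ B \ A := Finset.mem_sdiff.mpr ⟨hsB, h⟩
      rw [hBA, Finset.mem_singleton] at this
      exact hsnl this
    obtain ⟨j, hj, hjeq⟩ := Finset.mem_image.mp hsA
    refine ⟨j, hj, ?_⟩
    have := congrArg Fin.val hjeq
    simpa using this
  -- build the whole chain
  have hchain : ∀ n : ℕ, n < ℓ → ∃ j ∈ S', j.val = n := by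
    intro n
    induction n with
    | zero => intro _; exact h0S
    | succ k ih =>
      intro hk
      obtain ⟨j, hj, hjv⟩ := ih (by omega)
      obtain ⟨j', hj', hjv'⟩ := hclose j hj (by omega)
      exact ⟨j', hj', by omega⟩
  have huniv : (Finset.univ : Finset (Fin ℓ)) ⊆ S' := by
    intro i _
    obtain ⟨j, hj, hjv⟩ := hchain i.val i.isLt
    have : j = i := Fin.ext hjv
    rwa [this] at hj
  have := Finset.card_le_card huniv
  rw [Finset.card_univ, Fintype.card_fin, hcard] at this
  omega

/-- counting helper: if each fiber of `g` inside `E` has at most 3 elements and `g` maps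
`E` into `T`, then `|E| ≤ 3|T|`. -/
lemma st7_cnt {γ δ : Type} [DecidableEq γ] [DecidableEq δ] (E : Finset γ) (g : γ → δ)
    (T : Finset δ) (h : ∀ e ∈ E, g e ∈ T)
    (hdeg : ∀ c, (E.filter (fun e => g e = c)).card ≤ 3) : E.card ≤ 3 * T.card := by
  have hsub : E ⊆ T.biUnion (fun c => E.filter (fun e => g e = c)) := fun e he =>
    Finset.mem_biUnion.mpr ⟨g e, h e he, Finset.mem_filter.mpr ⟨he, rfl⟩⟩
  calc E.card ≤ (T.biUnion (fun c => E.filter (fun e => g e = c))).card :=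
        Finset.card_le_card hsub
    _ ≤ ∑ c ∈ T, (E.filter (fun e => g e = c)).card := Finset.card_biUnion_le
    _ ≤ ∑ _c ∈ T, 3 := Finset.sum_le_sum fun c _ => hdeg c
    _ = 3 * T.card := by rw [Finset.sum_const, smul_eq_mul, mul_comm]

/-- deficiency-Hall: a "bipartite-oriented" edge set with degrees ≤ 3 contains a matching
covering at least a third of the edges. -/
lemma st7_hall {α β : Type} [DecidableEq α] [DecidableEq β] (E : Finset (α × β))
    (hL : ∀ a : α, (E.filter (fun e => e.1 = a)).card ≤ 3)
    (hR : ∀ b : β, (E.filter (fun e => e.2 = b)).card ≤ 3) :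
    ∃ S ⊆ E, E.card ≤ 3 * S.card ∧
      ∀ e ∈ S, ∀ f ∈ S, e ≠ f → e.1 ≠ f.1 ∧ e.2 ≠ f.2 := by
  rcases E.eq_empty_or_nonempty with rfl | hEne
  · exact ⟨∅, Finset.Subset.refl _, by simp, by simp⟩
  obtain ⟨e₀, he₀⟩ := hEne
  set X : Finset α := E.image Prod.fst with hX
  have hEX : E.card ≤ 3 * X.card :=
    st7_cnt E Prod.fst X (fun e he => Finset.mem_image_of_mem _ he) hL
  set r : ℕ := (E.card + 2) / 3 with hr
  have hr3 : E.card ≤ 3 * r ∧ 3 * r ≤ E.card + 2 := by omega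
  have hrX : r ≤ X.card := by omega
  set d : ℕ := X.card - r with hd
  set t : {x : α // x ∈ X} → Finset (β ⊕ Fin d) := fun x =>
    ((E.filter (fun e => e.1 = x.1)).image (fun e => Sum.inl e.2)) ∪
      (Finset.univ.image Sum.inr) with ht
  have hall : ∀ s : Finset {x : α // x ∈ X}, s.card ≤ (s.biUnion t).card := by
    intro s
    rcases s.eq_empty_or_nonempty with rfl | hsne
    · simp
    set s' : Finset α := s.image (fun x => x.1) with hs'
    have hs'card : s'.card = s.card :=
      Finset.card_image_of_injective _ Subtype.val_injective
    have hs'X : s' ⊆ X := by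
      intro a ha
      obtain ⟨x, _, rfl⟩ := Finset.mem_image.mp ha
      exact x.2
    set N : Finset β := s'.biUnion (fun a => (E.filter (fun e => e.1 = a)).image Prod.snd)
      with hN
    -- the biUnion contains the disjoint union of `inl '' N` and `inr '' univ`
    have hsub : (N.image Sum.inl) ∪ ((Finset.univ : Finset (Fin d)).image Sum.inr) ⊆ s.biUnion t := by
      intro z hz
      rcases Finset.mem_union.mp hz with hz | hz
      · obtain ⟨b, hb, rfl⟩ := Finset.mem_image.mp hz
        obtain ⟨a, ha, hb2⟩ := Finset.mem_biUnion.mp hb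
        obtain ⟨x, hx, rfl⟩ := Finset.mem_image.mp ha
        refine Finset.mem_biUnion.mpr ⟨x, hx, ?_⟩
        refine Finset.mem_union_left _ ?_
        obtain ⟨e, he, rfl⟩ := Finset.mem_image.mp hb2
        exact Finset.mem_image_of_mem _ he
      · obtain ⟨x, hx⟩ := hsne
        exact Finset.mem_biUnion.mpr ⟨x, hx, Finset.mem_union_right _ hz⟩
    have hdisj : Disjoint (N.image Sum.inl) ((Finset.univ : Finset (Fin d)).image Sum.inr) := by
      rw [Finset.disjoint_left]
      rintro z hz1 hz2
      obtain ⟨b, _, rfl⟩ := Finset.mem_image.mp hz1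
      obtain ⟨c, _, hc⟩ := Finset.mem_image.mp hz2
      exact Sum.inl_ne_inr hc.symm
    have hcard_union : ((N.image Sum.inl) ∪ ((Finset.univ : Finset (Fin d)).image Sum.inr)).card = N.card + d := by
      rw [Finset.card_union_of_disjoint hdisj,
        Finset.card_image_of_injective _ Sum.inl_injective,
        Finset.card_image_of_injective _ Sum.inr_injective]
      simp
    -- counting: E splits into edges with snd in N and edges with fst outside s'
    have hsplit : E ⊆ (E.filter (fun e => e.2 ∈ N)) ∪ (E.filter (fun e => e.1 ∈ X \ s')) := by
      intro e he
      by_cases h1 : e.1 ∈ s'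
      · refine Finset.mem_union_left _ (Finset.mem_filter.mpr ⟨he, ?_⟩)
        exact Finset.mem_biUnion.mpr ⟨e.1, h1,
          Finset.mem_image_of_mem _ (Finset.mem_filter.mpr ⟨he, rfl⟩)⟩
      · exact Finset.mem_union_right _ (Finset.mem_filter.mpr ⟨he,
          Finset.mem_sdiff.mpr ⟨Finset.mem_image_of_mem _ he, h1⟩⟩)
    have hc1 : (E.filter (fun e => e.2 ∈ N)).card ≤ 3 * N.card := by
      refine st7_cnt _ Prod.snd N (fun e he => (Finset.mem_filter.mp he).2) ?_
      intro c
      refine le_trans (Finset.card_le_card ?_) (hR c)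
      intro e he
      simp only [Finset.mem_filter] at he ⊢
      exact ⟨he.1.1, he.2⟩
    have hc2 : (E.filter (fun e => e.1 ∈ X \ s')).card ≤ 3 * (X \ s').card := by
      refine st7_cnt _ Prod.fst (X \ s') (fun e he => (Finset.mem_filter.mp he).2) ?_
      intro c
      refine le_trans (Finset.card_le_card ?_) (hL c)
      intro e he
      simp only [Finset.mem_filter] at he ⊢
      exact ⟨he.1.1, he.2⟩
    have hsdcard : (X \ s').card = X.card - s'.card := Finset.card_sdiff_of_subset hs'X
    have hEbound : E.card ≤ (E.filter (fun e => e.2 ∈ N)).card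
        + (E.filter (fun e => e.1 ∈ X \ s')).card :=
      le_trans (Finset.card_le_card hsplit) (Finset.card_union_le _ _)
    have hs'leX : s'.card ≤ X.card := Finset.card_le_card hs'X
    have hgoal : s.card ≤ N.card + d := by omega
    exact le_trans hgoal (by rw [← hcard_union]; exact Finset.card_le_card hsub)
  obtain ⟨f, hfinj, hf⟩ := (Finset.all_card_le_biUnion_card_iff_exists_injective t).mp hall
  set TL : Finset {x : α // x ∈ X} := Finset.univ.filter (fun x => (f x).isLeft) with hTL
  set TR : Finset {x : α // x ∈ X} := Finset.univ.filter (fun x => (f x).isRight) with hTR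
  have hTRd : TR.card ≤ d := by
    have : TR.card ≤ ((Finset.univ : Finset (Fin d)).image (Sum.inr : Fin d → β ⊕ Fin d)).card := by
      refine Finset.card_le_card_of_injOn f ?_ ?_
      · intro x hx
        rw [hTR, Finset.mem_coe, Finset.mem_filter] at hx
        obtain ⟨c, hc⟩ := Sum.isRight_iff.mp hx.2
        rw [hc]
        exact Finset.mem_image_of_mem _ (Finset.mem_univ c)
      · exact fun x _ y _ hxy => hfinj hxy
    rwa [Finset.card_image_of_injective _ Sum.inr_injective, Finset.card_univ,
      Fintype.card_fin] at this
  have hcardX : TL.card + TR.card = X.card := by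
    have := Finset.card_filter_add_card_filter_not
      (s := (Finset.univ : Finset {x : α // x ∈ X})) (p := fun x => (f x).isLeft)
    rw [hTL, hTR]
    rw [Finset.card_univ] at this
    have heq : Finset.univ.filter (fun x : {x : α // x ∈ X} => (f x).isRight)
        = Finset.univ.filter (fun x => ¬ (f x).isLeft) := by
      apply Finset.filter_congr
      intro x _
      simp [Sum.not_isLeft]
    rw [heq, this]
    simp [Fintype.card_coe]
  have hTLr : r ≤ TL.card := by omega
  set junk : β := e₀.2 with hjunk
  set g : {x : α // x ∈ X} → α × β := fun x => (x.1, Sum.elim id (fun _ => junk) (f x)) with hg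
  have hfx : ∀ x ∈ TL, f x = Sum.inl (g x).2 := by
    intro x hx
    rw [hTL, Finset.mem_filter] at hx
    obtain ⟨b, hb⟩ := Sum.isLeft_iff.mp hx.2
    rw [hg]
    simp [hb]
  set S : Finset (α × β) := TL.image g with hS
  have hginj : ∀ x ∈ TL, ∀ y ∈ TL, g x = g y → x = y := by
    intro x _ y _ hxy
    exact Subtype.ext (congrArg Prod.fst hxy)
  have hScard : S.card = TL.card := Finset.card_image_of_injOn hginj
  have hSE : S ⊆ E := by
    intro e he
    obtain ⟨x, hx, rfl⟩ := Finset.mem_image.mp he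
    have hfx' := hfx x hx
    have := hf x
    rw [ht] at this
    rcases Finset.mem_union.mp this with h | h
    · obtain ⟨e', he', heq⟩ := Finset.mem_image.mp h
      rw [hfx'] at heq
      have hsnd : e'.2 = (g x).2 := Sum.inl_injective heq
      have he'' := Finset.mem_filter.mp he'
      have : e' = g x := Prod.ext he''.2 hsnd
      rw [← this]
      exact he''.1
    · obtain ⟨c, _, hc⟩ := Finset.mem_image.mp h
      rw [hfx'] at hc
      exact absurd hc (Sum.inr_ne_inl)
  refine ⟨S, hSE, ?_, ?_⟩
  · rw [hScard]
    omega
  · intro e he e' he' hne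
    obtain ⟨x, hx, rfl⟩ := Finset.mem_image.mp he
    obtain ⟨x', hx', rfl⟩ := Finset.mem_image.mp he'
    have hxx : x ≠ x' := fun h => hne (by rw [h])
    constructor
    · intro h1
      exact hxx (Subtype.ext h1)
    · intro h2
      apply hxx
      apply hfinj
      rw [hfx x hx, hfx x' hx', h2]

theorem stmt_7 (k ℓ : ℕ) (hℓ : 4 < ℓ) (v : Fin (ℓ + 1) → ℤ × ℤ)
    (hv : IsDualPathStar k ℓ v) :
    ∃ S : Finset (Fin ℓ), ℓ / 3 ≤ S.card ∧
      ∀ i ∈ S, ∀ j ∈ S, i ≠ j →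
        ∀ x ∈ ({(sepPair (v i.castSucc) (v i.succ)).1,
            (sepPair (v i.castSucc) (v i.succ)).2} : Set (ℤ × ℤ)),
          x ∉ ({(sepPair (v j.castSucc) (v j.succ)).1,
            (sepPair (v j.castSucc) (v j.succ)).2} : Set (ℤ × ℤ)) := by
  obtain ⟨hv1, _hv2, hv3⟩ := hv
  set P : Fin ℓ → (ℤ × ℤ) × (ℤ × ℤ) := fun i => sepPair (v i.castSucc) (v i.succ) with hP
  set np : Fin ℓ → (ℤ × ℤ) × (ℤ × ℤ) := fun i => st7_npair (P i) with hnp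
  -- injectivity of the normalized pair map
  have hinj : Function.Injective np := by
    intro i j hij
    have hpp : P i = P j := st7_npair_inj _ _ _ _ hij
    rcases st7_pair_inj _ _ _ _ (hv1 i) (hv1 j) hpp with ⟨h1, h2⟩ | ⟨h1, h2⟩
    · rcases lt_trichotomy (i.castSucc : Fin (ℓ + 1)) j.castSucc with h | h | h
      · exfalso
        have := (hv3 _ _ h h1).2
        have := congrArg Fin.val this
        simp [Fin.val_last] at this
        omega
      · exact Fin.castSucc_injective _ h
      · exfalso
        have := (hv3 _ _ h h1.symm).2
        have := congrArg Fin.val this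
        simp [Fin.val_last] at this
        omega
    · exfalso
      rcases lt_trichotomy (i.castSucc : Fin (ℓ + 1)) j.succ with h | h | h
      · obtain ⟨h0, hl⟩ := hv3 _ _ h h1
        have h0' : i.val = 0 := by
          have := congrArg Fin.val h0; simpa using this
        have hl' : j.val + 1 = ℓ := by
          have := congrArg Fin.val hl; simpa [Fin.val_last] using this
        have hlt : (i.succ : Fin (ℓ + 1)) < j.castSucc := by
          rw [Fin.lt_def]
          simp only [Fin.val_succ, Fin.coe_castSucc]
          omega
        obtain ⟨hz, _⟩ := hv3 _ _ hlt h2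
        exact Fin.succ_ne_zero i hz
      · have hval : i.val = j.val + 1 := by
          have := congrArg Fin.val h; simpa using this
        have hlt : (j.castSucc : Fin (ℓ + 1)) < i.succ := by
          rw [Fin.lt_def]
          simp only [Fin.val_succ, Fin.coe_castSucc]
          omega
        obtain ⟨hz, hlast⟩ := hv3 _ _ hlt h2.symm
        have hz' : j.val = 0 := by
          have := congrArg Fin.val hz; simpa using this
        have hlast' : i.val + 1 = ℓ := by
          have := congrArg Fin.val hlast; simpa [Fin.val_last] using this
        omega
      · obtain ⟨hz, _⟩ := hv3 _ _ h h1.symm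
        exact Fin.succ_ne_zero j hz
  set E : Finset ((ℤ × ℤ) × (ℤ × ℤ)) := Finset.univ.image np with hE
  have hEcard : E.card = ℓ := by
    rw [hE, Finset.card_image_of_injective _ hinj, Finset.card_univ, Fintype.card_fin]
  -- components of np i versus P i
  have hnpc : ∀ i, ((np i).1 = (P i).1 ∧ (np i).2 = (P i).2) ∨
      ((np i).1 = (P i).2 ∧ (np i).2 = (P i).1) := by
    intro i
    rw [hnp]
    unfold st7_npair
    beta_reduce
    split_ifs
    · exact Or.inl ⟨rfl, rfl⟩
    · exact Or.inr ⟨rfl, rfl⟩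
  -- degree bounds
  have hdegL : ∀ p : ℤ × ℤ, (E.filter (fun e => e.1 = p)).card ≤ 3 := by
    intro p
    rw [hE, Finset.filter_image]
    refine le_trans Finset.card_image_le ?_
    refine st7_core hℓ v hv3 (st7_corners p) (st7_corners_card p) _ ?_
    intro i hi
    rw [Finset.mem_filter] at hi
    have hc := hi.2
    have hor : p = (P i).1 ∨ p = (P i).2 := by
      rcases hnpc i with ⟨ha, _⟩ | ⟨ha, _⟩
      · exact Or.inl (by rw [← ha, hc])
      · exact Or.inr (by rw [← ha, hc])
    exact st7_mem_corners _ _ p (hv1 i) hor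
  have hdegR : ∀ p : ℤ × ℤ, (E.filter (fun e => e.2 = p)).card ≤ 3 := by
    intro p
    rw [hE, Finset.filter_image]
    refine le_trans Finset.card_image_le ?_
    refine st7_core hℓ v hv3 (st7_corners p) (st7_corners_card p) _ ?_
    intro i hi
    rw [Finset.mem_filter] at hi
    have hc := hi.2
    have hor : p = (P i).1 ∨ p = (P i).2 := by
      rcases hnpc i with ⟨_, ha⟩ | ⟨_, ha⟩
      · exact Or.inr (by rw [← ha, hc])
      · exact Or.inl (by rw [← ha, hc])
    exact st7_mem_corners _ _ p (hv1 i) hor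
  obtain ⟨S0, hS0E, hS0card, hS0disj⟩ := st7_hall E hdegL hdegR
  set T : Finset (Fin ℓ) := Finset.univ.filter (fun i => np i ∈ S0) with hT
  have hTcard : S0.card ≤ T.card := by
    have hsub : S0 ⊆ T.image np := by
      intro e he
      have heE := hS0E he
      rw [hE] at heE
      obtain ⟨i, _, rfl⟩ := Finset.mem_image.mp heE
      exact Finset.mem_image_of_mem _ (Finset.mem_filter.mpr ⟨Finset.mem_univ i, he⟩)
    exact le_trans (Finset.card_le_card hsub) Finset.card_image_le
  -- parity of the two components of np
  have hpar : ∀ i : Fin ℓ, Even ((np i).1.1 + (np i).1.2) ∧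
      ¬ Even ((np i).2.1 + (np i).2.2) := by
    intro i
    have hs := st7_sum (v i.castSucc) (v i.succ)
    rw [hnp]
    unfold st7_npair
    beta_reduce
    split_ifs with h
    · refine ⟨h, ?_⟩
      rw [show (P i).2.1 + (P i).2.2 = (P i).1.1 + (P i).1.2 + 1 from hs]
      rw [Int.even_add_one]
      simpa using h
    · refine ⟨?_, by simpa using h⟩
      show Even ((P i).2.1 + (P i).2.2)
      rw [show (P i).2.1 + (P i).2.2 = (P i).1.1 + (P i).1.2 + 1 from hs]
      rw [Int.even_add_one]
      exact h
  refine ⟨T, ?_, ?_⟩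
  · have h3 : ℓ ≤ 3 * T.card := by
      calc ℓ = E.card := hEcard.symm
        _ ≤ 3 * S0.card := hS0card
        _ ≤ 3 * T.card := by omega
    omega
  · intro i hi j hj hne x hx hx'
    have hiS : np i ∈ S0 := (Finset.mem_filter.mp hi).2
    have hjS : np j ∈ S0 := (Finset.mem_filter.mp hj).2
    have hnpne : np i ≠ np j := fun h => hne (hinj h)
    obtain ⟨hd1, hd2⟩ := hS0disj _ hiS _ hjS hnpne
    obtain ⟨hpi1, hpi2⟩ := hpar i
    obtain ⟨hpj1, hpj2⟩ := hpar j
    simp only [Set.mem_insert_iff, Set.mem_singleton_iff] at hx hx'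
    -- translate P components into np components
    have hxi : x = (np i).1 ∨ x = (np i).2 := by
      rcases hnpc i with ⟨ha, hb⟩ | ⟨ha, hb⟩ <;> rcases hx with rfl | rfl
      · exact Or.inl ha.symm
      · exact Or.inr hb.symm
      · exact Or.inr hb.symm
      · exact Or.inl ha.symm
    have hxj : x = (np j).1 ∨ x = (np j).2 := by
      rcases hnpc j with ⟨ha, hb⟩ | ⟨ha, hb⟩ <;> rcases hx' with rfl | rfl
      · exact Or.inl ha.symm
      · exact Or.inr hb.symm
      · exact Or.inr hb.symm
      · exact Or.inl ha.symm
    rcases hxi with rfl | rfl <;> rcases hxj with h | h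
    · exact hd1 h
    · rw [h] at hpi1; exact hpj2 hpi1
    · rw [h] at hpi2; exact hpi2 hpj1
    · exact hd2 h
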